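/- Let u and v be factors of the Thue–Morse word t of the same length n ≥ 4 (so that each of u, v occurs in t only at positions of one fixed parity). Then u and v are 2-abelian equivalent if and only if u and v have the same first letter, p(u) = p(v), and either p(u) is even or the occurrence positions of u and the occurrence positions of v in t have the same parity. -/

import Mathlib

/-- The Thue–Morse sequence: sum of binary digits of `n`, mod 2. -/
def tm (n : ℕ) : Fin 2 := Fin.ofNat 2 (Nat.digits 2 n).sum

/-- The factor of the Thue–Morse word of length `n` starting at position `i`. -/
def tmWord (i n : ℕ) : List (Fin 2) := (List.range n).map (fun j => tm (i + j))

/-- A binary word is a factor of the Thue–Morse word. -/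
def IsFactor (w : List (Fin 2)) : Prop := ∃ i : ℕ, w = tmWord i w.length

/-- Number of occurrences of the word `x` as a factor of `u`. -/
def occCount (u x : List (Fin 2)) : ℕ :=
  ((List.range u.length).filter (fun i => (u.drop i).take x.length = x)).length

/-- Two binary words (of equal length) are 2-abelian equivalent: same first letter,
same last letter, and the same number of occurrences of every word of length 2. -/
def TwoAbelianEquiv (u v : List (Fin 2)) : Prop :=
  u.length = v.length ∧ u.take 1 = v.take 1 ∧
  u.drop (u.length - 1) = v.drop (v.length - 1) ∧
  ∀ x : List (Fin 2), x.length = 2 → occCount u x = occCount v x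

/-- `P n` is the 2-abelian complexity of the Thue–Morse word: the number of
2-abelian equivalence classes of factors of length `n`. -/
noncomputable def P (n : ℕ) : ℕ :=
  Nat.card (Quot (fun u v : {w : List (Fin 2) // w.length = n ∧ IsFactor w} =>
    TwoAbelianEquiv u.1 v.1))

/-- `pword w` counts the pairs in `w`: the total number of occurrences of `00` and `11`. -/
def pword (w : List (Fin 2)) : ℕ := occCount w [0, 0] + occCount w [1, 1]

/-- The set of possible pair counts of Thue–Morse factors of length `n`. -/
def pairs (n : ℕ) : Set ℕ :=
  { m | ∃ w : List (Fin 2), w.length = n ∧ IsFactor w ∧ pword w = m }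

/-- The set of possible pair counts of Thue–Morse factors of length `n`
occurring at some odd position (pure odd factors). -/
def PAIRS (n : ℕ) : Set ℕ := { m | ∃ i : ℕ, i % 2 = 1 ∧ pword (tmWord i n) = m }

/-! ### Auxiliary material -/

open Fin.NatCast

section Aux

lemma fin2_cases (x : Fin 2) : x = 0 ∨ x = 1 := by revert x; decide
lemma fin2_em (x y : Fin 2) : y = x ∨ y = x + 1 := by revert x y; decide
lemma fin2_ne_add_one (x : Fin 2) : x ≠ x + 1 := by revert x; decide
lemma fin2_eq_one (x : Fin 2) : x ≠ 0 ↔ x = 1 := by revert x; decide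
lemma fin2_add_one_eq (x y : Fin 2) : x + 1 = y ↔ x = y + 1 := by revert x y; decide
lemma fin2_add_two (x : Fin 2) : x + 1 + 1 = x := by revert x; decide
lemma fin2_add_self (x : Fin 2) : x + x = 0 := by revert x; decide

lemma natCast_fin2 (P : ℕ) : ((P : Fin 2) = 0 ↔ P % 2 = 0) := by
  rw [Fin.ext_iff, Fin.val_natCast]
  simp

lemma tm_two_mul (k : ℕ) : tm (2 * k) = tm k := by
  rcases Nat.eq_zero_or_pos k with rfl | hk
  · simp
  · unfold tm
    rw [Nat.digits_def' (by norm_num : (1:ℕ) < 2) (by positivity)]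
    simp [Nat.mul_div_cancel_left _ (by norm_num : 0 < 2), Nat.mul_mod_right]

lemma tm_two_mul_add_one (k : ℕ) : tm (2 * k + 1) = tm k + 1 := by
  unfold tm
  rw [Nat.digits_def' (by norm_num : (1:ℕ) < 2) (by omega)]
  have h1 : (2 * k + 1) % 2 = 1 := by omega
  have h2 : (2 * k + 1) / 2 = k := by omega
  rw [h1, h2]
  push_cast [List.sum_cons]
  apply Fin.ext
  simp only [Fin.val_ofNat, Fin.val_add, Fin.val_one]
  omega

lemma odd_of_pair {m : ℕ} (h : tm m = tm (m + 1)) : m % 2 = 1 := by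
  rcases Nat.even_or_odd m with he | ho
  · exfalso
    obtain ⟨k, rfl⟩ := he
    rw [show k + k = 2 * k by ring, tm_two_mul, tm_two_mul_add_one] at h
    exact fin2_ne_add_one _ h
  · exact Nat.odd_iff.mp ho

lemma tm_parity_shift (i : ℕ) : tm i = tm (i / 2) + ((i % 2 : ℕ) : Fin 2) := by
  rcases Nat.even_or_odd i with he | ho
  · have h2 : i % 2 = 0 := Nat.even_iff.mp he
    have h1 : i = 2 * (i / 2) := by omega
    rw [h2]
    conv_lhs => rw [h1]
    rw [tm_two_mul]
    simp
  · have h2 : i % 2 = 1 := Nat.odd_iff.mp ho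
    have h1 : i = 2 * (i / 2) + 1 := by omega
    rw [h2]
    conv_lhs => rw [h1]
    rw [tm_two_mul_add_one]
    simp

/-! #### `tmWord` structure -/

lemma tmWord_length (i n : ℕ) : (tmWord i n).length = n := by simp [tmWord]

lemma tmWord_cons (i n : ℕ) : tmWord i (n + 1) = tm i :: tmWord (i + 1) n := by
  unfold tmWord
  rw [List.range_succ_eq_map, List.map_cons, List.map_map]
  congr 1
  apply List.map_congr_left
  intro a _
  simp only [Function.comp_apply]
  congr 1
  omega

lemma tmWord_drop (j i n : ℕ) : (tmWord i n).drop j = tmWord (i + j) (n - j) := by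
  induction j generalizing i n with
  | zero => simp
  | succ j ih =>
    cases n with
    | zero => simp [tmWord]
    | succ n =>
      rw [tmWord_cons, List.drop_succ_cons, ih]
      have h1 : i + 1 + j = i + (j + 1) := by omega
      have h2 : n - j = n + 1 - (j + 1) := by omega
      rw [h1, h2]

lemma tmWord_take_one (i n : ℕ) (hn : 1 ≤ n) : (tmWord i n).take 1 = [tm i] := by
  obtain ⟨m, rfl⟩ := Nat.exists_eq_add_of_le hn
  rw [Nat.add_comm, tmWord_cons]
  simp

lemma tmWord_drop_last (i n : ℕ) (hn : 1 ≤ n) :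
    (tmWord i n).drop (n - 1) = [tm (i + n - 1)] := by
  rw [tmWord_drop]
  have h1 : n - (n - 1) = 1 := by omega
  have h2 : i + (n - 1) = i + n - 1 := by omega
  rw [h1, h2]
  rw [show (1:ℕ) = 0 + 1 from rfl, tmWord_cons]
  simp [tmWord]

/-! #### Occurrence counts as Finset cardinalities -/

lemma list_filter_range_card (n : ℕ) (p : ℕ → Prop) [DecidablePred p] :
    ((List.range n).filter (fun j => decide (p j))).length = ((Finset.range n).filter p).card := by
  induction n with
  | zero => simp
  | succ n ih =>
    rw [List.range_succ, List.filter_append, List.length_append, Finset.range_add_one,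
      Finset.filter_insert]
    by_cases h : p n
    · rw [if_pos h, Finset.card_insert_of_notMem (by simp)]
      simp [h, ih]
    · rw [if_neg h]
      simp [h, ih]

def Nc (i n : ℕ) (x0 x1 : Fin 2) : ℕ :=
  ((Finset.range (n - 1)).filter (fun j => tm (i + j) = x0 ∧ tm (i + j + 1) = x1)).card

lemma occ_eq (i n : ℕ) (x0 x1 : Fin 2) :
    occCount (tmWord i n) [x0, x1] = Nc i n x0 x1 := by
  have hlen : (tmWord i n).length = n := by simp [tmWord]
  have hcond : ∀ j, j < n →
      (((tmWord i n).drop j).take 2 = [x0, x1] ↔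
        (j + 1 < n ∧ tm (i + j) = x0 ∧ tm (i + j + 1) = x1)) := by
    intro j hj
    rw [tmWord_drop]
    rcases Nat.lt_or_ge (j+1) n with h2 | h2
    · obtain ⟨m, hm⟩ : ∃ m, n - j = m + 2 := ⟨n - j - 2, by omega⟩
      rw [hm, tmWord_cons, tmWord_cons]
      have : i + j + 1 + 0 = i + j + 1 := by omega
      simp [h2, this, and_assoc]
    · have h1 : n - j = 1 := by omega
      rw [h1, show (1:ℕ) = 0 + 1 from rfl, tmWord_cons]
      constructor
      · intro h
        have := congrArg List.length h
        simp [tmWord] at this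
      · intro h; omega
  unfold occCount
  rw [hlen]
  simp only [List.length_cons, List.length_nil]
  rw [list_filter_range_card n (fun j => ((tmWord i n).drop j).take (0+1+1) = [x0,x1])]
  have : (Finset.range n).filter (fun j => ((tmWord i n).drop j).take (0+1+1) = [x0,x1])
      = (Finset.range (n-1)).filter (fun j => tm (i + j) = x0 ∧ tm (i + j + 1) = x1) := by
    ext a
    simp only [Finset.mem_filter, Finset.mem_range]
    constructor
    · rintro ⟨ha, hc⟩
      have := (hcond a ha).mp hc
      exact ⟨by omega, this.2⟩
    · rintro ⟨ha, hc⟩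
      have ha' : a < n := by omega
      exact ⟨ha', (hcond a ha').mpr ⟨by omega, hc⟩⟩
  rw [this]
  rfl

/-! #### Generic counting identities for binary sequences -/

def Cf (f : ℕ → Fin 2) (nn : ℕ) (x0 x1 : Fin 2) : ℕ :=
  ((Finset.range nn).filter (fun j => f j = x0 ∧ f (j + 1) = x1)).card

lemma cf_split_right (f : ℕ → Fin 2) (nn : ℕ) (x0 : Fin 2) :
    Cf f nn x0 0 + Cf f nn x0 1 = ((Finset.range nn).filter (fun j => f j = x0)).card := by
  unfold Cf
  rw [← Finset.filter_filter, ← Finset.filter_filter]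
  have h := Finset.card_filter_add_card_filter_not
    (s := (Finset.range nn).filter (fun j => f j = x0)) (p := fun j => f (j + 1) = 0)
  have e1 : ((Finset.range nn).filter (fun j => f j = x0)).filter (fun a => ¬ f (a+1) = 0)
      = ((Finset.range nn).filter (fun j => f j = x0)).filter (fun a => f (a+1) = 1) :=
    Finset.filter_congr (by intro x _; simp [fin2_eq_one])
  rw [e1] at h
  exact h

lemma cf_split_left (f : ℕ → Fin 2) (nn : ℕ) (x1 : Fin 2) :
    Cf f nn 0 x1 + Cf f nn 1 x1 = ((Finset.range nn).filter (fun j => f (j + 1) = x1)).card := by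
  unfold Cf
  have e0 : ∀ z : Fin 2, (Finset.range nn).filter (fun j => f j = z ∧ f (j + 1) = x1)
      = ((Finset.range nn).filter (fun j => f (j+1) = x1)).filter (fun j => f j = z) := by
    intro z
    rw [Finset.filter_filter]
    apply Finset.filter_congr
    intro x _
    simp [and_comm]
  rw [e0 0, e0 1]
  have h := Finset.card_filter_add_card_filter_not
    (s := (Finset.range nn).filter (fun j => f (j+1) = x1)) (p := fun j => f j = 0)
  have e1 : ((Finset.range nn).filter (fun j => f (j+1) = x1)).filter (fun a => ¬ f a = 0)
      = ((Finset.range nn).filter (fun j => f (j+1) = x1)).filter (fun a => f a = 1) :=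
    Finset.filter_congr (by intro x _; simp [fin2_eq_one])
  rw [e1] at h
  exact h

lemma count_total (f : ℕ → Fin 2) (nn : ℕ) :
    ((Finset.range nn).filter (fun j => f j = 0)).card
      + ((Finset.range nn).filter (fun j => f j = 1)).card = nn := by
  have h := Finset.card_filter_add_card_filter_not
    (s := Finset.range nn) (p := fun j => f j = 0)
  have e1 : (Finset.range nn).filter (fun a => ¬ f a = 0)
      = (Finset.range nn).filter (fun a => f a = 1) :=
    Finset.filter_congr (by intro x _; simp [fin2_eq_one])
  rw [e1, Finset.card_range] at h
  exact h

lemma count_shift (f : ℕ → Fin 2) (nn : ℕ) (c : Fin 2) :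
    ((Finset.range nn).filter (fun j => f (j + 1) = c)).card + (if f 0 = c then 1 else 0)
      = ((Finset.range nn).filter (fun j => f j = c)).card + (if f nn = c then 1 else 0) := by
  rw [Finset.card_filter, Finset.card_filter]
  have A := Finset.sum_range_succ (fun j => if f j = c then 1 else 0) nn
  have B := Finset.sum_range_succ' (fun j => if f j = c then 1 else 0) nn
  omega

lemma main_lemma (f g : ℕ → Fin 2) (nn : ℕ) (h0 : f 0 = g 0)
    (h00 : Cf f nn 0 0 = Cf g nn 0 0) (h11 : Cf f nn 1 1 = Cf g nn 1 1) :
    (∀ x0 x1 : Fin 2, Cf f nn x0 x1 = Cf g nn x0 x1) ∧ f nn = g nn := by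
  have Af0 := cf_split_right f nn 0
  have Af1 := cf_split_right f nn 1
  have Bf0 := cf_split_left f nn 0
  have Tf := count_total f nn
  have Sf := count_shift f nn 0
  have Ag0 := cf_split_right g nn 0
  have Ag1 := cf_split_right g nn 1
  have Bg0 := cf_split_left g nn 0
  have Tg := count_total g nn
  have Sg := count_shift g nn 0
  rw [h0] at Sf
  set E0 : ℕ := if g 0 = (0:Fin 2) then 1 else 0 with hE0
  set Ef : ℕ := if f nn = (0:Fin 2) then 1 else 0 with hEf
  set Eg : ℕ := if g nn = (0:Fin 2) then 1 else 0 with hEg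
  have bf : Ef ≤ 1 := by rw [hEf]; split <;> omega
  have bg : Eg ≤ 1 := by rw [hEg]; split <;> omega
  have hee : Ef = Eg := by omega
  have hC01 : Cf f nn 0 1 = Cf g nn 0 1 := by omega
  have hC10 : Cf f nn 1 0 = Cf g nn 1 0 := by omega
  have hlast : f nn = g nn := by
    by_cases hc : f nn = 0 <;> by_cases hd : g nn = 0
    · rw [hc, hd]
    · rw [hEf, hEg] at hee; simp [hc, hd] at hee
    · rw [hEf, hEg] at hee; simp [hc, hd] at hee
    · rw [(fin2_eq_one _).mp hc, (fin2_eq_one _).mp hd]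
  refine ⟨fun x0 x1 => ?_, hlast⟩
  rcases fin2_cases x0 with rfl | rfl <;> rcases fin2_cases x1 with rfl | rfl <;> assumption

/-! #### The alternation structure of pairs in the Thue–Morse word -/

def Scount (a b : ℕ) (c : Fin 2) : ℕ :=
  ((Finset.Ico a b).filter (fun k => tm k = c + 1 ∧ tm (k + 1) = c)).card

lemma scount_succ (a b : ℕ) (hab : a ≤ b) (c : Fin 2) :
    Scount a (b + 1) c = Scount a b c + (if tm b = c + 1 ∧ tm (b + 1) = c then 1 else 0) := by
  unfold Scount
  rw [Nat.Ico_succ_right_eq_insert_Ico hab, Finset.filter_insert]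
  split
  · rw [Finset.card_insert_of_notMem (by simp)]
  · omega

lemma alt (a : ℕ) : ∀ b, a ≤ b →
    tm b = tm a + ((Scount a b 0 + Scount a b 1 : ℕ) : Fin 2) ∧
    Scount a b (tm a + 1) = (Scount a b 0 + Scount a b 1 + 1) / 2 := by
  intro b
  induction b with
  | zero => intro h; interval_cases a; simp [Scount]
  | succ b ih =>
    intro hab
    rcases Nat.lt_or_ge a (b + 1) with h | h
    · have hab' : a ≤ b := by omega
      obtain ⟨IH1, IH2⟩ := ih hab'
      rw [scount_succ a b hab' 0, scount_succ a b hab' 1, scount_succ a b hab' (tm a + 1)]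
      rcases fin2_em (tm b) (tm (b + 1)) with heq | hne
      · have hnone : ∀ c : Fin 2, ¬ (tm b = c + 1 ∧ tm (b + 1) = c) := by
          rintro c ⟨h1, h2⟩
          apply fin2_ne_add_one c
          rw [← h1, ← heq, h2]
        rw [if_neg (hnone 0), if_neg (hnone 1), if_neg (hnone (tm a + 1))]
        simp only [add_zero]
        exact ⟨by rw [heq, IH1], IH2⟩
      · have hcond : ∀ c : Fin 2, (tm b = c + 1 ∧ tm (b + 1) = c) ↔ c = tm b + 1 := by
          intro c
          constructor
          · rintro ⟨h1, h2⟩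
            rw [← h2, hne]
          · rintro rfl
            refine ⟨?_, hne⟩
            rcases fin2_cases (tm b) with h | h <;> rw [h] <;> decide
        simp only [hcond 0, hcond 1, hcond (tm a + 1)]
        have h01 : (if (0:Fin 2) = tm b + 1 then (1:ℕ) else 0)
            + (if (1:Fin 2) = tm b + 1 then (1:ℕ) else 0) = 1 := by
          rcases fin2_cases (tm b + 1) with h | h <;> rw [h] <;> decide
        constructor
        · have hre : Scount a b 0 + (if (0:Fin 2) = tm b + 1 then (1:ℕ) else 0)
              + (Scount a b 1 + (if (1:Fin 2) = tm b + 1 then (1:ℕ) else 0))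
              = Scount a b 0 + Scount a b 1 + 1 := by omega
          rw [hre, hne, IH1]
          push_cast
          exact add_assoc _ _ _
        · have hre : Scount a b 0 + (if (0:Fin 2) = tm b + 1 then (1:ℕ) else 0)
              + (Scount a b 1 + (if (1:Fin 2) = tm b + 1 then (1:ℕ) else 0))
              = Scount a b 0 + Scount a b 1 + 1 := by omega
          rw [hre, IH2]
          by_cases hp : (Scount a b 0 + Scount a b 1) % 2 = 0
          · have hcast : ((Scount a b 0 + Scount a b 1 : ℕ) : Fin 2) = 0 :=
              (natCast_fin2 _).mpr hp
            have : tm a + 1 = tm b + 1 := by rw [IH1, hcast, add_zero]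
            rw [if_pos this]
            omega
          · have hcast : ((Scount a b 0 + Scount a b 1 : ℕ) : Fin 2) = 1 :=
              (fin2_eq_one _).mp (fun hc => hp ((natCast_fin2 _).mp hc))
            have : ¬ (tm a + 1 = tm b + 1) := by
              rw [IH1, hcast]
              intro hc
              have := add_right_cancel hc
              exact fin2_ne_add_one (tm a) this
            rw [if_neg this]
            omega
    · have : a = b + 1 := by omega
      subst this
      simp [Scount]

lemma S_formula (a b : ℕ) (hab : a ≤ b) (c : Fin 2) :
    Scount a b c
      = (Scount a b 0 + Scount a b 1 + (if c = tm a + 1 then 1 else 0)) / 2 := by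
  obtain ⟨h1, h2⟩ := alt a b hab
  have hsum : Scount a b 0 + Scount a b 1 = Scount a b (tm a) + Scount a b (tm a + 1) := by
    rcases fin2_cases (tm a) with h | h <;> rw [h]
    · rw [show (0:Fin 2) + 1 = 1 by decide]
    · rw [show (1:Fin 2) + 1 = 0 by decide]
      ring
  rcases fin2_em (tm a) c with hc | hc
  · subst hc
    rw [if_neg (fin2_ne_add_one _)]
    omega
  · subst hc
    rw [if_pos rfl]
    omega

lemma ncc_eq_scount (i n : ℕ) (c : Fin 2) :
    Nc i n c c = Scount (i / 2) ((i + n - 1) / 2) c := by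
  unfold Nc Scount
  apply Finset.card_nbij' (i := fun j => (i + j) / 2) (j := fun k => 2 * k + 1 - i)
  · intro j hj
    simp only [Finset.mem_coe, Finset.mem_filter, Finset.mem_range] at hj
    obtain ⟨hjn, hc0, hc1⟩ := hj
    have hodd : (i + j) % 2 = 1 := odd_of_pair (hc0.trans hc1.symm)
    have hk : i + j = 2 * ((i + j) / 2) + 1 := by omega
    set k := (i + j) / 2 with hkdef
    have e0 : tm (i + j) = tm k + 1 := by rw [hk, tm_two_mul_add_one]
    have e1 : tm (i + j + 1) = tm (k + 1) := by
      rw [hk, show 2 * k + 1 + 1 = 2 * (k + 1) by ring, tm_two_mul]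
    simp only [Finset.mem_coe, Finset.mem_filter, Finset.mem_Ico]
    refine ⟨⟨by omega, by omega⟩, ?_, by rw [← e1]; exact hc1⟩
    exact (fin2_add_one_eq _ _).mp (e0.symm.trans hc0)
  · intro k hk
    simp only [Finset.mem_coe, Finset.mem_filter, Finset.mem_Ico] at hk
    obtain ⟨⟨hak, hkb⟩, h1, h2⟩ := hk
    have hge : i ≤ 2 * k + 1 := by omega
    have hij : i + (2 * k + 1 - i) = 2 * k + 1 := by omega
    simp only [Finset.mem_coe, Finset.mem_filter, Finset.mem_range]
    refine ⟨by omega, ?_, ?_⟩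
    · rw [hij, tm_two_mul_add_one, h1, fin2_add_two]
    · rw [hij, show 2 * k + 1 + 1 = 2 * (k + 1) by ring, tm_two_mul]
      exact h2
  · intro j hj
    simp only [Finset.mem_coe, Finset.mem_filter, Finset.mem_range] at hj
    obtain ⟨hjn, hc0, hc1⟩ := hj
    have hodd : (i + j) % 2 = 1 := odd_of_pair (hc0.trans hc1.symm)
    beta_reduce
    omega
  · intro k hk
    simp only [Finset.mem_coe, Finset.mem_filter, Finset.mem_Ico] at hk
    beta_reduce
    omega

lemma ncc_formula (i n : ℕ) (hn : 1 ≤ n) (c : Fin 2) :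
    Nc i n c c = (Nc i n 0 0 + Nc i n 1 1
      + (if c = tm i + ((i % 2 : ℕ) : Fin 2) + 1 then 1 else 0)) / 2 := by
  have hab : i / 2 ≤ (i + n - 1) / 2 := Nat.div_le_div_right (by omega)
  have hcstar : tm i + ((i % 2 : ℕ) : Fin 2) + 1 = tm (i / 2) + 1 := by
    rw [tm_parity_shift i, add_assoc (tm (i/2)), fin2_add_self, add_zero]
  rw [ncc_eq_scount i n c, ncc_eq_scount i n 0, ncc_eq_scount i n 1, hcstar,
    S_formula _ _ hab]

end Aux

theorem thueMorse_twoAbelian_iff (n : ℕ) (hn : 4 ≤ n) (u v : List (Fin 2))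
    (hu : u.length = n) (hv : v.length = n) (hfu : IsFactor u) (hfv : IsFactor v) :
    TwoAbelianEquiv u v ↔
      (u.take 1 = v.take 1 ∧ pword u = pword v ∧
        (Even (pword u) ∨
          ∃ i j : ℕ, u = tmWord i n ∧ v = tmWord j n ∧ i % 2 = j % 2)) := by
  obtain ⟨i0, hi0⟩ := hfu
  obtain ⟨j0, hj0⟩ := hfv
  rw [hu] at hi0
  rw [hv] at hj0
  have hn1 : 1 ≤ n := by omega
  constructor
  · rintro ⟨hlen, htake, hlast, hocc⟩
    have hpw : pword u = pword v := by
      unfold pword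
      rw [hocc [0,0] rfl, hocc [1,1] rfl]
    refine ⟨htake, hpw, ?_⟩
    rcases Nat.even_or_odd (pword u) with hev | hod
    · exact Or.inl hev
    · right
      refine ⟨i0, j0, hi0, hj0, ?_⟩
      by_contra hpar
      have hfl : tm i0 = tm j0 := by
        have h1 := tmWord_take_one i0 n hn1
        have h2 := tmWord_take_one j0 n hn1
        rw [hi0, h1, hj0, h2] at htake
        simpa using htake
      have hcastne : ((i0 % 2 : ℕ) : Fin 2) ≠ ((j0 % 2 : ℕ) : Fin 2) := by
        have h01 : i0 % 2 = 0 ∧ j0 % 2 = 1 ∨ i0 % 2 = 1 ∧ j0 % 2 = 0 := by omega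
        rcases h01 with ⟨ha, hb⟩ | ⟨ha, hb⟩ <;> rw [ha, hb] <;> decide
      set c : Fin 2 := tm i0 + ((i0 % 2 : ℕ) : Fin 2) + 1 with hc
      have hocc_cc := hocc [c, c] rfl
      rw [hi0, hj0, occ_eq, occ_eq] at hocc_cc
      have hpu : pword u = Nc i0 n 0 0 + Nc i0 n 1 1 := by
        unfold pword
        rw [hi0, occ_eq, occ_eq]
      have hpv : pword v = Nc j0 n 0 0 + Nc j0 n 1 1 := by
        unfold pword
        rw [hj0, occ_eq, occ_eq]
      have hF1 := ncc_formula i0 n hn1 c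
      have hF2 := ncc_formula j0 n hn1 c
      rw [if_pos hc] at hF1
      have hne2 : ¬ (c = tm j0 + ((j0 % 2 : ℕ) : Fin 2) + 1) := by
        rw [hc, ← hfl]
        intro hcontra
        exact hcastne (add_left_cancel (add_right_cancel hcontra))
      rw [if_neg hne2] at hF2
      have hodd : pword u % 2 = 1 := Nat.odd_iff.mp hod
      omega
  · rintro ⟨htake, hp, hdisj⟩
    -- obtain witnesses with matching diagonal pair counts
    obtain ⟨i, j, hiu, hjv, hcc⟩ : ∃ i j : ℕ, u = tmWord i n ∧ v = tmWord j n ∧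
        ∀ c : Fin 2, Nc i n c c = Nc j n c c := by
      have key : ∀ i j : ℕ, u = tmWord i n → v = tmWord j n →
          (pword u % 2 = 0 ∨ (i % 2 : ℕ) = j % 2) → ∀ c : Fin 2, Nc i n c c = Nc j n c c := by
        intro i j hiu hjv hcase c
        have hfl : tm i = tm j := by
          have h1 := tmWord_take_one i n hn1
          have h2 := tmWord_take_one j n hn1
          rw [hiu, h1, hjv, h2] at htake
          simpa using htake
        have hpu : pword u = Nc i n 0 0 + Nc i n 1 1 := by
          unfold pword
          rw [hiu, occ_eq, occ_eq]
        have hpv : pword v = Nc j n 0 0 + Nc j n 1 1 := by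
          unfold pword
          rw [hjv, occ_eq, occ_eq]
        have hF1 := ncc_formula i n hn1 c
        have hF2 := ncc_formula j n hn1 c
        rcases hcase with hev | hpar
        · -- p even: both values are p/2 · regardless of the indicator
          have b1 : (if c = tm i + ((i % 2 : ℕ) : Fin 2) + 1 then (1:ℕ) else 0) ≤ 1 := by
            split <;> omega
          have b2 : (if c = tm j + ((j % 2 : ℕ) : Fin 2) + 1 then (1:ℕ) else 0) ≤ 1 := by
            split <;> omega
          omega
        · have : tm i + ((i % 2 : ℕ) : Fin 2) + 1 = tm j + ((j % 2 : ℕ) : Fin 2) + 1 := by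
            rw [hfl, hpar]
          rw [this] at hF1
          omega
      rcases hdisj with hev | ⟨i, j, hiu, hjv, hpar⟩
      · exact ⟨i0, j0, hi0, hj0, key i0 j0 hi0 hj0 (Or.inl (Nat.even_iff.mp hev))⟩
      · exact ⟨i, j, hiu, hjv, key i j hiu hjv (Or.inr hpar)⟩
    -- now apply the generic lemma
    have hcf : ∀ x0 x1 : Fin 2, Cf (fun k => tm (i + k)) (n - 1) x0 x1 = Nc i n x0 x1 :=
      fun _ _ => rfl
    have hcg : ∀ x0 x1 : Fin 2, Cf (fun k => tm (j + k)) (n - 1) x0 x1 = Nc j n x0 x1 :=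
      fun _ _ => rfl
    have h0 : tm (i + 0) = tm (j + 0) := by
      have h1 := tmWord_take_one i n hn1
      have h2 := tmWord_take_one j n hn1
      rw [hiu, h1, hjv, h2] at htake
      simpa using htake
    have hmain := main_lemma (fun k => tm (i + k)) (fun k => tm (j + k)) (n - 1) h0
      (by rw [hcf, hcg]; exact hcc 0) (by rw [hcf, hcg]; exact hcc 1)
    refine ⟨hu.trans hv.symm, htake, ?_, ?_⟩
    · rw [hu, hv, hiu, hjv, tmWord_drop_last i n hn1, tmWord_drop_last j n hn1]
      have := hmain.2
      have e1 : i + (n - 1) = i + n - 1 := by omega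
      have e2 : j + (n - 1) = j + n - 1 := by omega
      rw [e1, e2] at this
      rw [this]
    · intro x hx
      obtain ⟨x0, x1, rfl⟩ := List.length_eq_two.mp hx
      rw [hiu, hjv, occ_eq, occ_eq, ← hcf, ← hcg]
      exact hmain.1 x0 x1
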